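/- Let C_1, …, C_k ⊆ C be cylinder sets, each obtained by fixing the coordinates on a finite subset of F_ℓ. Then there exist h⁺ ∈ H_C^+ and h⁻ ∈ H_C^- such that h = h⁺∘h⁻ satisfies μ_C(h C_i ∩ C_j) = μ_C(C_i)·μ_C(C_j) for all 1 ≤ i, j ≤ k. -/

import Mathlib

open MeasureTheory ProbabilityTheory Filter

namespace Finitary

/-- The free group `F_ℓ` on `ℓ` generators. -/
abbrev FG (ℓ : ℕ) := FreeGroup (Fin ℓ)

instance {ℓ : ℕ} : Countable (FG ℓ) := FreeGroup.toWord_injective.countable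

/-- The word length on the free group. -/
noncomputable def wl {ℓ : ℕ} (g : FG ℓ) : ℕ := FreeGroup.norm g

/-- The ball `B(r)` of radius `r` centered at the identity. -/
def ball (ℓ r : ℕ) : Set (FG ℓ) := {g | wl g ≤ r}

/-- `W_a`: the set of reduced words ending in the generator `a`, together with the identity. -/
def Wa {ℓ : ℕ} (a : Fin ℓ) : Set (FG ℓ) :=
  {g | g = 1 ∨ wl g = wl (g * (FreeGroup.of a)⁻¹) + 1}

/-- The configuration space `X_p = {1,…,m}^{F_ℓ}`. -/
abbrev Conf (ℓ m : ℕ) := FG ℓ → Fin m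

/-- The shift action `(g·x)_h = x_{g⁻¹h}`. -/
def shift {ℓ m : ℕ} (g : FG ℓ) (x : Conf ℓ m) : Conf ℓ m := fun h => x (g⁻¹ * h)

/-- `μ` is the Bernoulli product measure on `X_p` with marginal weights `P`:
every cylinder set has measure equal to the product of the weights of its fixed symbols. -/
def IsBernoulli {ℓ m : ℕ} (P : Fin m → ℝ) (μ : Measure (Conf ℓ m)) : Prop :=
  IsProbabilityMeasure μ ∧
    ∀ (A : Finset (FG ℓ)) (σ : FG ℓ → Fin m),
      (μ {x | ∀ g ∈ A, x g = σ g}).toReal = ∏ g ∈ A, P (σ g)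

/-- The set of radii `r` such that the ball `B(r)` determines `φ(x)_e`. -/
def codeSet {ℓ m n : ℕ} (φ : Conf ℓ m → Conf ℓ n) (x : Conf ℓ m) : Set ℕ :=
  {r | ∀ x' : Conf ℓ m, (∀ g ∈ ball ℓ r, x' g = x g) → φ x' 1 = φ x 1}

/-- `r_φ(x)`: the least radius of a ball determining `φ(x)_e`. -/
noncomputable def rphi {ℓ m n : ℕ} (φ : Conf ℓ m → Conf ℓ n) (x : Conf ℓ m) : ℕ :=
  sInf (codeSet φ x)

/-- `v_φ(x) = |B(r_φ(x))|`. -/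
noncomputable def vphi {ℓ m n : ℕ} (φ : Conf ℓ m → Conf ℓ n) (x : Conf ℓ m) : ℕ :=
  (ball ℓ (rphi φ x)).ncard

/-- A finitary coding: a measurable, equivariant, measure-preserving map which is
a.e. finitarily determined at the identity coordinate (i.e. continuous off a null set). -/
structure IsFinitaryCoding {ℓ m n : ℕ} (μp : Measure (Conf ℓ m)) (μq : Measure (Conf ℓ n))
    (φ : Conf ℓ m → Conf ℓ n) : Prop where
  measurable : Measurable φ
  measurePreserving : MeasurePreserving φ μp μq
  equivariant : ∀ g : FG ℓ, ∀ᵐ x ∂μp, φ (shift g x) = shift g (φ x)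
  finitary : ∀ᵐ x ∂μp, (codeSet φ x).Nonempty

/-- A finitary isomorphism: a pair of mutually inverse (mod null sets) finitary codings. -/
structure IsFinitaryIso {ℓ m n : ℕ} (μp : Measure (Conf ℓ m)) (μq : Measure (Conf ℓ n))
    (φ : Conf ℓ m → Conf ℓ n) (ψ : Conf ℓ n → Conf ℓ m) : Prop where
  toCoding : IsFinitaryCoding μp μq φ
  invCoding : IsFinitaryCoding μq μp ψ
  leftInv : ∀ᵐ x ∂μp, ψ (φ x) = x
  rightInv : ∀ᵐ y ∂μq, φ (ψ y) = y

/-- Finite expectation of code volume: `∫ v_φ dμ_p < ∞` and `∫ v_{φ⁻¹} dμ_q < ∞`. -/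
def FiniteExpectation {ℓ m n : ℕ} (μp : Measure (Conf ℓ m)) (μq : Measure (Conf ℓ n))
    (φ : Conf ℓ m → Conf ℓ n) (ψ : Conf ℓ n → Conf ℓ m) : Prop :=
  (∫⁻ x, (vphi φ x : ENNReal) ∂μp) < ⊤ ∧ (∫⁻ y, (vphi ψ y : ENNReal) ∂μq) < ⊤

/-- The sub-σ-algebra generated by the coordinate maps `x ↦ x_g`, `g ∈ S`. -/
def coordAlg {ℓ m : ℕ} (S : Set (FG ℓ)) : MeasurableSpace (Conf ℓ m) :=
  MeasurableSpace.comap (fun x => S.restrict x) inferInstance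

/-- The past algebra `𝒜_{p,a}`, generated by the coordinates in `W_a`. -/
def pastAlg {ℓ m : ℕ} (a : Fin ℓ) : MeasurableSpace (Conf ℓ m) := coordAlg (Wa a)

/-- The atom of `x` for the σ-algebra generated by the coordinates in `S`. -/
def atomOn {ℓ m : ℕ} (S : Set (FG ℓ)) (x : Conf ℓ m) : Set (Conf ℓ m) :=
  {y | ∀ g ∈ S, y g = x g}

/-- The regular conditional probability `μ^𝒞(s | x)` given the sub-σ-algebra `𝒞`. -/
noncomputable def condProb {ℓ m : ℕ} (μ : Measure (Conf ℓ m)) [IsFiniteMeasure μ]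
    (𝒞 : MeasurableSpace (Conf ℓ m)) (s : Set (Conf ℓ m)) (x : Conf ℓ m) : ENNReal :=
  @condExpKernel (Conf ℓ m) MeasurableSpace.pi inferInstance μ inferInstance 𝒞 x s

/-- Conditional information `I_μ(ℬ|𝒞)(x) = −log μ^𝒞([x]_ℬ | x)`, where the atom `[x]_ℬ`
of the sub-σ-algebra `ℬ` is supplied explicitly. -/
noncomputable def condInfo {ℓ m : ℕ} (μ : Measure (Conf ℓ m)) [IsFiniteMeasure μ]
    (𝒞 : MeasurableSpace (Conf ℓ m)) (atomB : Set (Conf ℓ m)) (x : Conf ℓ m) : ℝ :=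
  - Real.log ((condProb μ 𝒞 atomB x).toReal)

/-- The information cocycle `J(𝒜_{p,a}, V) = I(𝒜_{p,a}|V⁻¹𝒜_{p,a}) − I(V⁻¹𝒜_{p,a}|𝒜_{p,a})`
for a measure-preserving `V` (the Radon–Nikodym term of the general definition vanishes). -/
noncomputable def Jcoc {ℓ m : ℕ} (a : Fin ℓ) (μ : Measure (Conf ℓ m)) [IsFiniteMeasure μ]
    (V : Conf ℓ m → Conf ℓ m) (x : Conf ℓ m) : ℝ :=
  condInfo μ (MeasurableSpace.comap V (pastAlg a)) (atomOn (Wa a) x) x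
    - condInfo μ (pastAlg a) (V ⁻¹' atomOn (Wa a) (V x)) x

/-- The shift by `g` as a bijection of the configuration space. -/
def shiftEquiv {ℓ m : ℕ} (g : FG ℓ) : Equiv.Perm (Conf ℓ m) where
  toFun := shift g
  invFun := shift g⁻¹
  left_inv x := by funext h; simp [shift, mul_assoc]
  right_inv x := by funext h; simp [shift, mul_assoc]

/-- A locally finite measure-preserving measurable bijection of `(X_p, μ)`. -/
def IsLocallyFiniteMP {ℓ m : ℕ} (μ : Measure (Conf ℓ m)) (V : Equiv.Perm (Conf ℓ m)) : Prop :=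
  Measurable ⇑V ∧ Measurable ⇑V.symm ∧ MeasurePreserving ⇑V μ μ ∧
    ∀ᵐ x ∂μ, {g : FG ℓ | V x g ≠ x g}.Finite

/-- The group `G_p` generated by the shifts together with the locally finite
measure-preserving bijections. -/
def Gp {ℓ m : ℕ} (μ : Measure (Conf ℓ m)) : Subgroup (Equiv.Perm (Conf ℓ m)) :=
  Subgroup.closure ({V | ∃ g : FG ℓ, V = shiftEquiv g} ∪ {V | IsLocallyFiniteMP μ V})

/-- The cylinder set where the coordinates on `S` are fixed to the values of `η`. -/
def cylOn {ℓ m : ℕ} (S : Set (FG ℓ)) (η : FG ℓ → Fin m) : Set (Conf ℓ m) :=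
  {x | ∀ g ∈ S, x g = η g}

/-- `H_C^+`: locally finite m.p. bijections fixing all coordinates in `B(N) ∪ (F_ℓ ∖ W_a)`. -/
def HCplus {ℓ m : ℕ} (μ : Measure (Conf ℓ m)) (a : Fin ℓ) (N : ℕ) :
    Set (Equiv.Perm (Conf ℓ m)) :=
  {h | IsLocallyFiniteMP μ h ∧ ∀ᵐ x ∂μ, ∀ g ∈ ball ℓ N ∪ (Wa a)ᶜ, h x g = x g}

/-- `H_C^-`: locally finite m.p. bijections fixing all coordinates in `W_a ∪ B(N)`. -/
def HCminus {ℓ m : ℕ} (μ : Measure (Conf ℓ m)) (a : Fin ℓ) (N : ℕ) :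
    Set (Equiv.Perm (Conf ℓ m)) :=
  {h | IsLocallyFiniteMP μ h ∧ ∀ᵐ x ∂μ, ∀ g ∈ Wa a ∪ ball ℓ N, h x g = x g}

/-- The normalized measure `μ_C(A) = μ(A)/μ(C)` (real-valued). -/
noncomputable def relMeas {ℓ m : ℕ} (μ : Measure (Conf ℓ m)) (C A : Set (Conf ℓ m)) : ℝ :=
  (μ A).toReal / (μ C).toReal

/-- The set where `m_φ(x) ≤ M`. -/
def mphiLe {ℓ m n : ℕ} (φ : Conf ℓ m → Conf ℓ n) (a : Fin ℓ) (M : ℕ) : Set (Conf ℓ m) :=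
  {x | ∀ g ∈ Wa a, rphi φ (shift g⁻¹ x) ≤ wl g + M}

/-- The set where `a_φ(x) ≤ M`. -/
def aphiLe {ℓ m n : ℕ} (φ : Conf ℓ m → Conf ℓ n) (a : Fin ℓ) (M : ℕ) : Set (Conf ℓ m) :=
  {x | ∀ g ∉ Wa a, rphi φ (shift g⁻¹ x) ≤ wl g + M}

/-- The set `D = C ∩ {x : m_φ(x) ≤ M, a_φ(x) ≤ M}` for the cylinder `C` over `B(M)`
determined by `η`. -/
def Dset {ℓ m n : ℕ} (φ : Conf ℓ m → Conf ℓ n) (a : Fin ℓ) (M : ℕ) (η : FG ℓ → Fin m) :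
    Set (Conf ℓ m) :=
  cylOn (ball ℓ M) η ∩ (mphiLe φ a M ∩ aphiLe φ a M)

/-- The coboundary equation `J(𝒜_{p,a}, V) = J(𝒜_{q,a}, φVφ⁻¹)∘φ + f∘V − f` a.e.,
for every `V ∈ G_p`. -/
def CocycleEq {ℓ m n : ℕ} (a : Fin ℓ) (μp : Measure (Conf ℓ m)) (μq : Measure (Conf ℓ n))
    [IsFiniteMeasure μp] [IsFiniteMeasure μq] (φ : Conf ℓ m → Conf ℓ n)
    (ψ : Conf ℓ n → Conf ℓ m) (f : Conf ℓ m → ℝ) : Prop :=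
  ∀ V ∈ Gp μp, ∀ᵐ x ∂μp,
    Jcoc a μp (⇑V) x = Jcoc a μq (φ ∘ ⇑V ∘ ψ) (φ x) + f (V x) - f x

/-- Tail property: every point obtained from a point of `D ∖ E` by altering coordinates only
at `a^k` for `−M−n < k < −M` (or only at `a^k` for `M < k < M+n`) lies in `A`. -/
def TailProp {ℓ m : ℕ} (a : Fin ℓ) (M : ℕ) (D E A : Set (Conf ℓ m)) : Prop :=
  ∀ x ∈ D \ E, ∀ n : ℕ, ∀ x' : Conf ℓ m,
    ((∀ g : FG ℓ,
        (¬ ∃ k : ℤ, -(M : ℤ) - (n : ℤ) < k ∧ k < -(M : ℤ) ∧ g = (FreeGroup.of a) ^ k) →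
        x' g = x g) ∨
     (∀ g : FG ℓ,
        (¬ ∃ k : ℤ, (M : ℤ) < k ∧ k < (M : ℤ) + (n : ℤ) ∧ g = (FreeGroup.of a) ^ k) →
        x' g = x g)) →
    x' ∈ A

-- ########## Auxiliary material for STATEMENT 9 ##########

section SwapAux

variable {α : Type*} [DecidableEq α]

noncomputable def swapFun (S T : Finset α) (e : {x // x ∈ S} ≃ {x // x ∈ T}) (x : α) : α :=
  if hx : x ∈ S then (e ⟨x, hx⟩ : α) else if hx' : x ∈ T then (e.symm ⟨x, hx'⟩ : α) else x

lemma swapFun_mem_right {S T : Finset α} (e : {x // x ∈ S} ≃ {x // x ∈ T}) {x : α}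
    (hx : x ∈ S) : swapFun S T e x ∈ T := by
  simp only [swapFun, dif_pos hx]; exact (e ⟨x, hx⟩).2

lemma swapFun_mem_left {S T : Finset α} (hd : Disjoint S T) (e : {x // x ∈ S} ≃ {x // x ∈ T})
    {x : α} (hx : x ∈ T) : swapFun S T e x ∈ S := by
  have hxS : x ∉ S := fun h => (Finset.disjoint_left.mp hd h) hx
  simp only [swapFun, dif_neg hxS, dif_pos hx]; exact (e.symm ⟨x, hx⟩).2

lemma swapFun_eq_self {S T : Finset α} (e : {x // x ∈ S} ≃ {x // x ∈ T}) {x : α}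
    (hxS : x ∉ S) (hxT : x ∉ T) : swapFun S T e x = x := by
  simp only [swapFun, dif_neg hxS, dif_neg hxT]

lemma swapFun_involutive {S T : Finset α} (hd : Disjoint S T)
    (e : {x // x ∈ S} ≃ {x // x ∈ T}) : Function.Involutive (swapFun S T e) := by
  intro x
  by_cases hx : x ∈ S
  · have h1 : (e ⟨x, hx⟩ : α) ∈ T := (e ⟨x, hx⟩).2
    have h2 : (e ⟨x, hx⟩ : α) ∉ S := fun h => (Finset.disjoint_left.mp hd h) h1
    simp only [swapFun, dif_pos hx, dif_neg h2, dif_pos h1]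
    have h3 : (⟨(e ⟨x, hx⟩ : α), h1⟩ : {x // x ∈ T}) = e ⟨x, hx⟩ := Subtype.ext rfl
    rw [h3, Equiv.symm_apply_apply]
  · by_cases hx' : x ∈ T
    · have h1 : (e.symm ⟨x, hx'⟩ : α) ∈ S := (e.symm ⟨x, hx'⟩).2
      have h2 : (e.symm ⟨x, hx'⟩ : α) ∉ T := fun h => (Finset.disjoint_left.mp hd h1) h
      simp only [swapFun, dif_neg hx, dif_pos hx', dif_pos h1, dif_neg h2]
      have h3 : (⟨(e.symm ⟨x, hx'⟩ : α), h1⟩ : {x // x ∈ S}) = e.symm ⟨x, hx'⟩ := Subtype.ext rfl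
      rw [h3, Equiv.apply_symm_apply]
    · simp only [swapFun, dif_neg hx, dif_neg hx']

lemma exists_swap (S T : Finset α) (hcard : S.card = T.card) (hd : Disjoint S T) :
    ∃ f : α → α, Function.Involutive f ∧ (∀ x ∈ S, f x ∈ T) ∧ (∀ x ∈ T, f x ∈ S) ∧
      (∀ x, x ∉ S → x ∉ T → f x = x) := by
  have e : {x // x ∈ S} ≃ {x // x ∈ T} :=
    Fintype.equivOfCardEq (by rw [Fintype.card_coe, Fintype.card_coe, hcard])
  exact ⟨swapFun S T e, swapFun_involutive hd e, fun x hx => swapFun_mem_right e hx,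
    fun x hx => swapFun_mem_left hd e hx, fun x h1 h2 => swapFun_eq_self e h1 h2⟩

end SwapAux

section CylAux

variable {ℓ m : ℕ}

def cyl (A : Finset (FG ℓ)) (σ : FG ℓ → Fin m) : Set (Conf ℓ m) :=
  {x | ∀ g ∈ A, x g = σ g}

lemma measurableSet_cyl (A : Finset (FG ℓ)) (σ : FG ℓ → Fin m) : MeasurableSet (cyl A σ) := by
  have h : cyl A σ = ⋂ g ∈ (A : Set (FG ℓ)), (fun x : Conf ℓ m => x g) ⁻¹' {σ g} := by
    ext x; simp [cyl]
  rw [h]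
  exact MeasurableSet.biInter A.countable_toSet fun g _ =>
    (measurable_pi_apply g) (measurableSet_singleton _)

def cylSys (ℓ m : ℕ) : Set (Set (Conf ℓ m)) := {s | ∃ A σ, s = cyl A σ}

lemma isPiSystem_cylSys (ℓ m : ℕ) : IsPiSystem (cylSys ℓ m) := by
  classical
  rintro s ⟨A, σ, rfl⟩ t ⟨A', σ', rfl⟩ hne
  obtain ⟨x0, hx0s, hx0t⟩ := hne
  refine ⟨A ∪ A', fun g => if g ∈ A then σ g else σ' g, ?_⟩
  ext x
  simp only [cyl, Set.mem_inter_iff, Set.mem_setOf_eq, Finset.mem_union]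
  constructor
  · rintro ⟨h1, h2⟩ g hg
    by_cases hgA : g ∈ A
    · rw [if_pos hgA]; exact h1 g hgA
    · rw [if_neg hgA]; exact h2 g (hg.resolve_left hgA)
  · intro h
    refine ⟨fun g hg => ?_, fun g hg => ?_⟩
    · have := h g (Or.inl hg); rwa [if_pos hg] at this
    · by_cases hgA : g ∈ A
      · have h1 := h g (Or.inl hgA); rw [if_pos hgA] at h1
        exact h1.trans ((hx0s g hgA).symm.trans (hx0t g hg))
      · have := h g (Or.inr hg); rwa [if_neg hgA] at this

lemma generateFrom_cylSys (ℓ m : ℕ) :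
    MeasurableSpace.generateFrom (cylSys ℓ m) = (inferInstance : MeasurableSpace (Conf ℓ m)) := by
  apply le_antisymm
  · rw [MeasurableSpace.generateFrom_le_iff]
    rintro s ⟨A, σ, rfl⟩
    exact measurableSet_cyl A σ
  · have key : ∀ g : FG ℓ, Measurable[MeasurableSpace.generateFrom (cylSys ℓ m)]
        (fun x : Conf ℓ m => x g) := by
      intro g s _
      have h : (fun x : Conf ℓ m => x g) ⁻¹' s = ⋃ v ∈ s, cyl {g} (fun _ => v) := by
        ext x; simp [cyl]
      rw [h]
      exact MeasurableSet.biUnion s.to_countable fun v _ =>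
        MeasurableSpace.measurableSet_generateFrom ⟨{g}, fun _ => v, rfl⟩
    exact iSup_le fun g => MeasurableSpace.comap_le_iff_le_map.mpr fun s hs => key g hs

lemma bern_cyl {P : Fin m → ℝ} {μ : Measure (Conf ℓ m)} (hμ : IsBernoulli P μ)
    (A : Finset (FG ℓ)) (σ : FG ℓ → Fin m) :
    μ (cyl A σ) = ENNReal.ofReal (∏ g ∈ A, P (σ g)) := by
  haveI : IsProbabilityMeasure μ := hμ.1
  rw [← ENNReal.ofReal_toReal (measure_ne_top μ (cyl A σ))]
  congr 1
  exact hμ.2 A σ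

def preEquiv (ℓ m : ℕ) (π : Equiv.Perm (FG ℓ)) : Equiv.Perm (Conf ℓ m) where
  toFun x := fun g => x (π g)
  invFun x := fun g => x (π.symm g)
  left_inv x := funext fun g => by simp
  right_inv x := funext fun g => by simp

lemma preEquiv_apply (π : Equiv.Perm (FG ℓ)) (x : Conf ℓ m) (g : FG ℓ) :
    preEquiv ℓ m π x g = x (π g) := rfl

lemma measurable_precomp (f : FG ℓ → FG ℓ) :
    Measurable (fun x : Conf ℓ m => fun g => x (f g)) :=
  measurable_pi_lambda _ fun g => measurable_pi_apply (f g)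

lemma preEquiv_preimage_cyl (π : Equiv.Perm (FG ℓ)) (A : Finset (FG ℓ)) (σ : FG ℓ → Fin m) :
    (⇑(preEquiv ℓ m π)) ⁻¹' cyl A σ = cyl (A.image π) (fun g => σ (π.symm g)) := by
  classical
  ext x
  simp only [cyl, Set.mem_preimage, Set.mem_setOf_eq, Finset.mem_image, preEquiv,
    Equiv.coe_fn_mk]
  constructor
  · rintro h g ⟨g0, hg0, rfl⟩
    rw [Equiv.symm_apply_apply]; exact h g0 hg0
  · intro h g hg
    have := h (π g) ⟨g, hg, rfl⟩
    rwa [Equiv.symm_apply_apply] at this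

lemma measurePreserving_preEquiv {P : Fin m → ℝ} {μ : Measure (Conf ℓ m)}
    (hμ : IsBernoulli P μ) (π : Equiv.Perm (FG ℓ)) :
    MeasurePreserving (⇑(preEquiv ℓ m π)) μ μ := by
  classical
  haveI : IsProbabilityMeasure μ := hμ.1
  have hm : Measurable (⇑(preEquiv ℓ m π)) := measurable_precomp (⇑π)
  refine ⟨hm, ?_⟩
  haveI : IsProbabilityMeasure (Measure.map (⇑(preEquiv ℓ m π)) μ) :=
    Measure.isProbabilityMeasure_map hm.aemeasurable
  refine ext_of_generate_finite (cylSys ℓ m) (generateFrom_cylSys ℓ m).symm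
    (isPiSystem_cylSys ℓ m) ?_ (by simp)
  rintro s ⟨A, σ, rfl⟩
  rw [Measure.map_apply hm (measurableSet_cyl A σ), preEquiv_preimage_cyl,
    bern_cyl hμ, bern_cyl hμ]
  congr 1
  rw [Finset.prod_image (fun x _ y _ h => π.injective h)]
  exact Finset.prod_congr rfl fun g _ => by rw [Equiv.symm_apply_apply]

lemma ball_finite (ℓ r : ℕ) : (ball ℓ r).Finite := by
  have hsub : ball ℓ r ⊆ FreeGroup.toWord ⁻¹' {l : List (Fin ℓ × Bool) | l.length ≤ r} :=
    fun g hg => hg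
  exact (Set.Finite.preimage FreeGroup.toWord_injective.injOn
    (List.finite_length_le _ r)).subset hsub

lemma pow_mem_Wa (a : Fin ℓ) {n : ℕ} (hn : 1 ≤ n) : (FreeGroup.of a) ^ n ∈ Wa a := by
  refine Or.inr ?_
  have h1 : (FreeGroup.of a) ^ n * (FreeGroup.of a)⁻¹ = (FreeGroup.of a) ^ (n - 1) := by
    conv_lhs => rw [show n = (n - 1) + 1 from (Nat.succ_pred_eq_of_pos hn).symm, pow_succ]
    group
  rw [wl, wl, h1, FreeGroup.norm_of_pow, FreeGroup.norm_of_pow]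
  omega

lemma inv_pow_not_mem_Wa (a : Fin ℓ) {n : ℕ} (hn : 1 ≤ n) :
    ((FreeGroup.of a) ^ n)⁻¹ ∉ Wa a := by
  rintro (h1 | h2)
  · have := congrArg FreeGroup.norm (inv_eq_one.mp h1)
    rw [FreeGroup.norm_of_pow, FreeGroup.norm_one] at this; omega
  · have e1 : wl (((FreeGroup.of a) ^ n)⁻¹) = n := by
      rw [wl, FreeGroup.norm_inv_eq, FreeGroup.norm_of_pow]
    have e2 : ((FreeGroup.of a) ^ n)⁻¹ * (FreeGroup.of a)⁻¹ = ((FreeGroup.of a) ^ (n + 1))⁻¹ := by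
      rw [pow_succ]; group
    have e3 : wl (((FreeGroup.of a) ^ n)⁻¹ * (FreeGroup.of a)⁻¹) = n + 1 := by
      rw [e2, wl, FreeGroup.norm_inv_eq, FreeGroup.norm_of_pow]
    omega

end CylAux

theorem HC_mixes_cylinders
    {ℓ m : ℕ} (hℓ : 1 ≤ ℓ) (a : Fin ℓ) (P : Fin m → ℝ)
    (hP : ∀ i, 0 < P i) (hPsum : ∑ i, P i = 1)
    (μp : Measure (Conf ℓ m)) (hμp : IsBernoulli P μp)
    (N : ℕ) (η : FG ℓ → Fin m)
    (k : ℕ) (A : Fin k → Finset (FG ℓ)) (σ : Fin k → FG ℓ → Fin m)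
    (hsub : ∀ i, {x : Conf ℓ m | ∀ g ∈ A i, x g = σ i g} ⊆ cylOn (ball ℓ N) η) :
    ∃ hplus ∈ HCplus μp a N, ∃ hminus ∈ HCminus μp a N, ∀ i j : Fin k,
      relMeas μp (cylOn (ball ℓ N) η)
          ((⇑(hplus * hminus)) '' {x : Conf ℓ m | ∀ g ∈ A i, x g = σ i g} ∩
            {x : Conf ℓ m | ∀ g ∈ A j, x g = σ j g})
        = relMeas μp (cylOn (ball ℓ N) η) {x : Conf ℓ m | ∀ g ∈ A i, x g = σ i g} *
          relMeas μp (cylOn (ball ℓ N) η) {x : Conf ℓ m | ∀ g ∈ A j, x g = σ j g} := by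
  classical
  haveI : IsProbabilityMeasure μp := hμp.1
  -- the ball as a finset
  have hBfin := ball_finite ℓ N
  set B : Finset (FG ℓ) := hBfin.toFinset with hBdef
  have hmemB : ∀ g : FG ℓ, g ∈ B ↔ g ∈ ball ℓ N := fun g => hBfin.mem_toFinset
  set U : Finset (FG ℓ) := Finset.univ.biUnion A ∪ B with hUdef
  have hAU : ∀ i, A i ⊆ U := fun i =>
    (Finset.subset_biUnion_of_mem A (Finset.mem_univ i)).trans Finset.subset_union_left
  have hBU : B ⊆ U := Finset.subset_union_right
  have hwlU : ∀ g ∈ U, wl g ≤ U.sup wl := fun g hg => Finset.le_sup hg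
  set T : ℕ := max N (U.sup wl) with hTdef
  have hTN : N ≤ T := le_max_left _ _
  have hTR : U.sup wl ≤ T := le_max_right _ _
  -- fresh coordinates
  set fp : ℕ → FG ℓ := fun i => (FreeGroup.of a) ^ (T + 1 + i) with hfp
  set fm : ℕ → FG ℓ := fun i => ((FreeGroup.of a) ^ (T + 1 + i))⁻¹ with hfm
  have wl_fp : ∀ i, wl (fp i) = T + 1 + i := fun i => by
    simp only [hfp]; exact FreeGroup.norm_of_pow a _
  have wl_fm : ∀ i, wl (fm i) = T + 1 + i := fun i => by
    simp only [hfm]; rw [wl, FreeGroup.norm_inv_eq, FreeGroup.norm_of_pow]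
  have fp_inj : Function.Injective fp := fun i j h => by
    have h2 := congrArg wl h; rw [wl_fp, wl_fp] at h2; omega
  have fm_inj : Function.Injective fm := fun i j h => by
    have h2 := congrArg wl h; rw [wl_fm, wl_fm] at h2; omega
  have fp_notU : ∀ i, fp i ∉ U := fun i h => by
    have h2 := hwlU _ h; rw [wl_fp] at h2; omega
  have fm_notU : ∀ i, fm i ∉ U := fun i h => by
    have h2 := hwlU _ h; rw [wl_fm] at h2; omega
  have fp_nb : ∀ i, fp i ∉ ball ℓ N := fun i h => by
    have h2 : wl (fp i) ≤ N := h; rw [wl_fp] at h2; omega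
  have fm_nb : ∀ i, fm i ∉ ball ℓ N := fun i h => by
    have h2 : wl (fm i) ≤ N := h; rw [wl_fm] at h2; omega
  have fp_Wa : ∀ i, fp i ∈ Wa a := fun i => by
    simp only [hfp]; exact pow_mem_Wa a (by omega)
  have fm_nWa : ∀ i, fm i ∉ Wa a := fun i => by
    simp only [hfm]; exact inv_pow_not_mem_Wa a (by omega)
  -- the supports to be moved
  set Sp : Finset (FG ℓ) := U.filter (fun g => g ∈ Wa a ∧ g ∉ ball ℓ N) with hSpdef
  set Sm : Finset (FG ℓ) := U.filter (fun g => g ∉ Wa a ∧ g ∉ ball ℓ N) with hSmdef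
  set Fp : Finset (FG ℓ) := (Finset.range Sp.card).image fp with hFpdef
  set Fm : Finset (FG ℓ) := (Finset.range Sm.card).image fm with hFmdef
  have memSp : ∀ g, g ∈ Sp ↔ (g ∈ U ∧ g ∈ Wa a ∧ g ∉ ball ℓ N) := fun g => by
    rw [hSpdef]; exact Finset.mem_filter
  have memSm : ∀ g, g ∈ Sm ↔ (g ∈ U ∧ g ∉ Wa a ∧ g ∉ ball ℓ N) := fun g => by
    rw [hSmdef]; exact Finset.mem_filter
  have memFp : ∀ g, g ∈ Fp → ∃ i, g = fp i := by
    intro g hg; rw [hFpdef] at hg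
    obtain ⟨i, -, rfl⟩ := Finset.mem_image.mp hg; exact ⟨i, rfl⟩
  have memFm : ∀ g, g ∈ Fm → ∃ i, g = fm i := by
    intro g hg; rw [hFmdef] at hg
    obtain ⟨i, -, rfl⟩ := Finset.mem_image.mp hg; exact ⟨i, rfl⟩
  have cardFp : Sp.card = Fp.card := by
    rw [hFpdef, Finset.card_image_of_injective _ fp_inj, Finset.card_range]
  have cardFm : Sm.card = Fm.card := by
    rw [hFmdef, Finset.card_image_of_injective _ fm_inj, Finset.card_range]
  have hdp : Disjoint Sp Fp := Finset.disjoint_left.mpr fun g hg hg' => by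
    obtain ⟨i, rfl⟩ := memFp g hg'
    exact fp_notU i ((memSp _).mp hg).1
  have hdm : Disjoint Sm Fm := Finset.disjoint_left.mpr fun g hg hg' => by
    obtain ⟨i, rfl⟩ := memFm g hg'
    exact fm_notU i ((memSm _).mp hg).1
  obtain ⟨pf, pf_inv, pfST, pfTS, pf_id⟩ := exists_swap Sp Fp cardFp hdp
  obtain ⟨mf, mf_inv, mfST, mfTS, mf_id⟩ := exists_swap Sm Fm cardFm hdm
  -- basic membership facts
  have SpWa : ∀ g ∈ Sp, g ∈ Wa a := fun g hg => ((memSp g).mp hg).2.1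
  have Sp_nb : ∀ g ∈ Sp, g ∉ ball ℓ N := fun g hg => ((memSp g).mp hg).2.2
  have Sm_nWa : ∀ g ∈ Sm, g ∉ Wa a := fun g hg => ((memSm g).mp hg).2.1
  have Sm_nb : ∀ g ∈ Sm, g ∉ ball ℓ N := fun g hg => ((memSm g).mp hg).2.2
  have FpWa : ∀ g ∈ Fp, g ∈ Wa a := fun g hg => by
    obtain ⟨i, rfl⟩ := memFp g hg; exact fp_Wa i
  have Fp_nb : ∀ g ∈ Fp, g ∉ ball ℓ N := fun g hg => by
    obtain ⟨i, rfl⟩ := memFp g hg; exact fp_nb i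
  have Fp_nU : ∀ g ∈ Fp, g ∉ U := fun g hg => by
    obtain ⟨i, rfl⟩ := memFp g hg; exact fp_notU i
  have Fm_nWa : ∀ g ∈ Fm, g ∉ Wa a := fun g hg => by
    obtain ⟨i, rfl⟩ := memFm g hg; exact fm_nWa i
  have Fm_nb : ∀ g ∈ Fm, g ∉ ball ℓ N := fun g hg => by
    obtain ⟨i, rfl⟩ := memFm g hg; exact fm_nb i
  have Fm_nU : ∀ g ∈ Fm, g ∉ U := fun g hg => by
    obtain ⟨i, rfl⟩ := memFm g hg; exact fm_notU i
  -- fixing properties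
  have pf_fix : ∀ g : FG ℓ, (g ∈ ball ℓ N ∨ g ∉ Wa a) → pf g = g := by
    intro g hg
    refine pf_id g (fun h => ?_) (fun h => ?_)
    · rcases hg with h1 | h1
      · exact Sp_nb g h h1
      · exact h1 (SpWa g h)
    · rcases hg with h1 | h1
      · exact Fp_nb g h h1
      · exact h1 (FpWa g h)
  have mf_fix : ∀ g : FG ℓ, (g ∈ ball ℓ N ∨ g ∈ Wa a) → mf g = g := by
    intro g hg
    refine mf_id g (fun h => ?_) (fun h => ?_)
    · rcases hg with h1 | h1
      · exact Sm_nb g h h1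
      · exact Sm_nWa g h h1
    · rcases hg with h1 | h1
      · exact Fm_nb g h h1
      · exact Fm_nWa g h h1
  have pf_Wa_pres : ∀ g, g ∈ Wa a → pf g ∈ Wa a := by
    intro g hg
    by_cases h1 : g ∈ Sp
    · exact FpWa _ (pfST g h1)
    · by_cases h2 : g ∈ Fp
      · exact SpWa _ (pfTS g h2)
      · rw [pf_id g h1 h2]; exact hg
  have mf_nWa_pres : ∀ g, g ∉ Wa a → mf g ∉ Wa a := by
    intro g hg
    by_cases h1 : g ∈ Sm
    · exact Fm_nWa _ (mfST g h1)
    · by_cases h2 : g ∈ Fm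
      · exact Sm_nWa _ (mfTS g h2)
      · rw [mf_id g h1 h2]; exact hg
  -- the combined permutation
  set π : FG ℓ → FG ℓ := fun g => mf (pf g) with hπdef
  have π_spec : ∀ g, π g = mf (pf g) := fun g => by rw [hπdef]
  have π_invol : Function.Involutive π := by
    intro g
    rw [π_spec, π_spec]
    by_cases hg : g ∈ Wa a
    · have h1 : pf g ∈ Wa a := pf_Wa_pres g hg
      rw [mf_fix _ (Or.inr h1), pf_inv g, mf_fix _ (Or.inr hg)]
    · rw [pf_fix g (Or.inr hg), pf_fix _ (Or.inr (mf_nWa_pres g hg)), mf_inv g]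
  have π_inj : Function.Injective π := π_invol.injective
  have π_ball : ∀ g ∈ ball ℓ N, π g = g := fun g hg => by
    rw [π_spec, pf_fix g (Or.inl hg), mf_fix g (Or.inl hg)]
  have P3 : ∀ g ∈ U, π g ∈ U → g ∈ B := by
    intro g hgU hπU
    by_contra hgB
    have hgb : g ∉ ball ℓ N := fun h => hgB ((hmemB g).mpr h)
    by_cases hg : g ∈ Wa a
    · have hgSp : g ∈ Sp := (memSp g).mpr ⟨hgU, hg, hgb⟩
      have h1 : pf g ∈ Fp := pfST g hgSp
      have h2 : π g = pf g := by rw [π_spec, mf_fix _ (Or.inr (FpWa _ h1))]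
      exact Fp_nU _ h1 (h2 ▸ hπU)
    · have hgSm : g ∈ Sm := (memSm g).mpr ⟨hgU, hg, hgb⟩
      have h2 : π g = mf g := by rw [π_spec, pf_fix g (Or.inr hg)]
      have h1 : mf g ∈ Fm := mfST g hgSm
      exact Fm_nU _ h1 (h2 ▸ hπU)
  -- the two bijections
  have hp_mem : preEquiv ℓ m (pf_inv.toPerm pf) ∈ HCplus μp a N := by
    constructor
    · refine ⟨measurable_precomp _, ?_, measurePreserving_preEquiv hμp _, ?_⟩
      · have hsymm : ⇑(preEquiv ℓ m (pf_inv.toPerm pf)).symm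
            = fun (x : Conf ℓ m) g => x ((pf_inv.toPerm pf).symm g) := rfl
        rw [hsymm]; exact measurable_precomp _
      · refine Filter.Eventually.of_forall fun x => ?_
        refine Set.Finite.subset (Sp ∪ Fp).finite_toSet fun g hg => ?_
        simp only [Set.mem_setOf_eq] at hg
        by_contra hgn
        simp only [Finset.coe_union, Set.mem_union, Finset.mem_coe] at hgn
        push_neg at hgn
        apply hg
        rw [preEquiv_apply, Function.Involutive.coe_toPerm, pf_id g hgn.1 hgn.2]
    · refine Filter.Eventually.of_forall fun x g hg => ?_
      have hfix : pf g = g := by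
        refine pf_fix g ?_
        rcases hg with h | h
        · exact Or.inl h
        · exact Or.inr h
      rw [preEquiv_apply, Function.Involutive.coe_toPerm, hfix]
  have hm_mem : preEquiv ℓ m (mf_inv.toPerm mf) ∈ HCminus μp a N := by
    constructor
    · refine ⟨measurable_precomp _, ?_, measurePreserving_preEquiv hμp _, ?_⟩
      · have hsymm : ⇑(preEquiv ℓ m (mf_inv.toPerm mf)).symm
            = fun (x : Conf ℓ m) g => x ((mf_inv.toPerm mf).symm g) := rfl
        rw [hsymm]; exact measurable_precomp _
      · refine Filter.Eventually.of_forall fun x => ?_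
        refine Set.Finite.subset (Sm ∪ Fm).finite_toSet fun g hg => ?_
        simp only [Set.mem_setOf_eq] at hg
        by_contra hgn
        simp only [Finset.coe_union, Set.mem_union, Finset.mem_coe] at hgn
        push_neg at hgn
        apply hg
        rw [preEquiv_apply, Function.Involutive.coe_toPerm, mf_id g hgn.1 hgn.2]
    · refine Filter.Eventually.of_forall fun x g hg => ?_
      have hfix : mf g = g := by
        refine mf_fix g ?_
        rcases hg with h | h
        · exact Or.inr h
        · exact Or.inl h
      rw [preEquiv_apply, Function.Involutive.coe_toPerm, hfix]
  refine ⟨_, hp_mem, _, hm_mem, ?_⟩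
  intro i j
  set hh := preEquiv ℓ m (pf_inv.toPerm pf) * preEquiv ℓ m (mf_inv.toPerm mf) with hhdef
  have hh_apply : ∀ (x : Conf ℓ m) (g : FG ℓ), hh x g = x (π g) := by
    intro x g
    rw [hhdef]
    rw [Equiv.Perm.mul_apply]
    rw [preEquiv_apply, preEquiv_apply, Function.Involutive.coe_toPerm,
      Function.Involutive.coe_toPerm, π_spec g]
  have hh_inv : Function.Involutive ⇑hh := by
    intro x; funext g
    rw [hh_apply, hh_apply, π_invol g]
  have himg : ⇑hh '' {x : Conf ℓ m | ∀ g ∈ A i, x g = σ i g}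
      = ⇑hh ⁻¹' {x : Conf ℓ m | ∀ g ∈ A i, x g = σ i g} := by
    ext x
    constructor
    · rintro ⟨y, hy, rfl⟩
      simp only [Set.mem_preimage]
      rw [hh_inv y]; exact hy
    · intro hx
      exact ⟨hh x, hx, hh_inv x⟩
  -- normalized cylinders
  set AB : Fin k → Finset (FG ℓ) := fun i => A i ∪ B with hABdef
  set σB : Fin k → FG ℓ → Fin m := fun i g => if g ∈ A i then σ i g else η g with hσBdef
  have memAB : ∀ i g, g ∈ AB i ↔ (g ∈ A i ∨ g ∈ B) := fun i g => by
    simp only [hABdef]; exact Finset.mem_union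
  have σB_pos : ∀ i g, g ∈ A i → σB i g = σ i g := fun i g hg => by
    simp only [hσBdef]; rw [if_pos hg]
  have σB_neg : ∀ i g, g ∉ A i → σB i g = η g := fun i g hg => by
    simp only [hσBdef]; rw [if_neg hg]
  have σB_mem : ∀ i, σB i ∈ {x : Conf ℓ m | ∀ g ∈ A i, x g = σ i g} :=
    fun i g hg => σB_pos i g hg
  have σB_ball : ∀ i, ∀ g ∈ ball ℓ N, σB i g = η g := fun i g hg => hsub i (σB_mem i) g hg
  have σB_B : ∀ i, ∀ g ∈ B, σB i g = η g := fun i g hg => σB_ball i g ((hmemB g).mp hg)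
  have hBsubAB : ∀ i, B ⊆ AB i := fun i g hg => (memAB i g).mpr (Or.inr hg)
  have hABU : ∀ i, AB i ⊆ U := by
    intro i g hg
    rcases (memAB i g).mp hg with h | h
    · exact hAU i h
    · exact hBU h
  have hCeq : ∀ i, {x : Conf ℓ m | ∀ g ∈ A i, x g = σ i g} = cyl (AB i) (σB i) := by
    intro i; ext x
    simp only [Set.mem_setOf_eq, cyl]
    constructor
    · intro h g hg
      rcases (memAB i g).mp hg with h1 | h1
      · rw [σB_pos i g h1]; exact h g h1
      · by_cases hA : g ∈ A i
        · rw [σB_pos i g hA]; exact h g hA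
        · rw [σB_neg i g hA]; exact hsub i h g ((hmemB g).mp h1)
    · intro h g hg
      have := h g ((memAB i g).mpr (Or.inl hg)); rwa [σB_pos i g hg] at this
  have hCset : cylOn (ball ℓ N) η = cyl B η := by
    ext x
    simp only [cylOn, cyl, Set.mem_setOf_eq]
    exact ⟨fun h g hg => h g ((hmemB g).mp hg), fun h g hg => h g ((hmemB g).mpr hg)⟩
  -- the image of a cylinder
  have key1 : ⇑hh ⁻¹' cyl (AB i) (σB i) = cyl ((AB i).image π) (fun g => σB i (π g)) := by
    ext x
    simp only [cyl, Set.mem_preimage, Set.mem_setOf_eq, Finset.mem_image]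
    constructor
    · rintro h g ⟨g0, hg0, rfl⟩
      rw [π_invol g0]
      have := h g0 hg0
      rwa [hh_apply] at this
    · intro h g hg
      rw [hh_apply]
      have := h (π g) ⟨g, hg, rfl⟩
      rwa [π_invol g] at this
  have KO : ∀ g, g ∈ (AB i).image π → g ∈ AB j → g ∈ B ∧ π g = g := by
    intro g hgi hgj
    obtain ⟨g0, hg0, rfl⟩ := Finset.mem_image.mp hgi
    have hg0B : g0 ∈ B := P3 g0 (hABU i hg0) (hABU j hgj)
    have hfix : π g0 = g0 := π_ball g0 ((hmemB g0).mp hg0B)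
    rw [hfix, hfix]
    exact ⟨hg0B, rfl⟩
  have KOv : ∀ g, g ∈ (AB i).image π → g ∈ AB j → σB i (π g) = σB j g := by
    intro g h1 h2
    obtain ⟨hB, hfix⟩ := KO g h1 h2
    rw [hfix, σB_B i g hB, σB_B j g hB]
  have key2 : ⇑hh '' {x : Conf ℓ m | ∀ g ∈ A i, x g = σ i g} ∩
        {x : Conf ℓ m | ∀ g ∈ A j, x g = σ j g}
      = cyl ((AB i).image π ∪ AB j)
          (fun g => if g ∈ (AB i).image π then σB i (π g) else σB j g) := by
    rw [himg, hCeq i, hCeq j, key1]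
    ext x
    simp only [cyl, Set.mem_inter_iff, Set.mem_setOf_eq, Finset.mem_union]
    constructor
    · rintro ⟨h1, h2⟩ g hg
      by_cases hgi : g ∈ (AB i).image π
      · rw [if_pos hgi]; exact h1 g hgi
      · rw [if_neg hgi]; exact h2 g (hg.resolve_left hgi)
    · intro h
      refine ⟨fun g hg => ?_, fun g hg => ?_⟩
      · have := h g (Or.inl hg); rwa [if_pos hg] at this
      · by_cases hgi : g ∈ (AB i).image π
        · have := h g (Or.inl hgi); rw [if_pos hgi] at this
          exact this.trans (KOv g hgi hg)
        · have := h g (Or.inr hg); rwa [if_neg hgi] at this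
  -- measure values
  have hval_C : (μp (cylOn (ball ℓ N) η)).toReal = ∏ g ∈ B, P (η g) := by
    rw [hCset]; exact hμp.2 B η
  have hval_i : (μp {x : Conf ℓ m | ∀ g ∈ A i, x g = σ i g}).toReal
      = ∏ g ∈ AB i, P (σB i g) := by
    rw [hCeq i]; exact hμp.2 (AB i) (σB i)
  have hval_j : (μp {x : Conf ℓ m | ∀ g ∈ A j, x g = σ j g}).toReal
      = ∏ g ∈ AB j, P (σB j g) := by
    rw [hCeq j]; exact hμp.2 (AB j) (σB j)
  have hval_L : (μp (⇑hh '' {x : Conf ℓ m | ∀ g ∈ A i, x g = σ i g} ∩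
        {x : Conf ℓ m | ∀ g ∈ A j, x g = σ j g})).toReal
      = ∏ g ∈ ((AB i).image π ∪ AB j),
          P (if g ∈ (AB i).image π then σB i (π g) else σB j g) := by
    rw [key2]
    exact hμp.2 ((AB i).image π ∪ AB j) _
  -- product manipulations
  have prod_split : (∏ g ∈ ((AB i).image π ∪ AB j),
        P (if g ∈ (AB i).image π then σB i (π g) else σB j g))
      = (∏ g ∈ (AB i).image π \ AB j, P (σB i (π g))) * ∏ g ∈ AB j, P (σB j g) := by
    rw [← Finset.sdiff_union_self_eq_union, Finset.prod_union Finset.sdiff_disjoint]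
    congr 1
    · refine Finset.prod_congr rfl fun g hg => ?_
      rw [if_pos (Finset.mem_sdiff.mp hg).1]
    · refine Finset.prod_congr rfl fun g hg => ?_
      by_cases h1 : g ∈ (AB i).image π
      · rw [if_pos h1, KOv g h1 hg]
      · rw [if_neg h1]
  have sdiff_eq : (AB i).image π \ AB j = (AB i \ B).image π := by
    ext g
    simp only [Finset.mem_sdiff, Finset.mem_image]
    constructor
    · rintro ⟨⟨g0, hg0, rfl⟩, hnj⟩
      refine ⟨g0, ⟨hg0, fun hB => ?_⟩, rfl⟩
      exact hnj (by rw [π_ball g0 ((hmemB g0).mp hB)]; exact (hBsubAB j) hB)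
    · rintro ⟨g0, ⟨hg0, hg0B⟩, rfl⟩
      exact ⟨⟨g0, hg0, rfl⟩, fun hj => hg0B (P3 g0 (hABU i hg0) (hABU j hj))⟩
  have prod_img : (∏ g ∈ (AB i \ B).image π, P (σB i (π g)))
      = ∏ g ∈ AB i \ B, P (σB i g) := by
    rw [Finset.prod_image (fun x _ y _ h => π_inj h)]
    exact Finset.prod_congr rfl fun g _ => by rw [π_invol g]
  have prod_i : (∏ g ∈ AB i \ B, P (σB i g)) * ∏ g ∈ B, P (η g)
      = ∏ g ∈ AB i, P (σB i g) := by
    rw [show (∏ g ∈ B, P (η g)) = ∏ g ∈ B, P (σB i g) from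
      Finset.prod_congr rfl fun g hg => by rw [σB_B i g hg]]
    exact Finset.prod_sdiff (hBsubAB i)
  have hcpos : (0:ℝ) < ∏ g ∈ B, P (η g) := Finset.prod_pos fun g _ => hP (η g)
  -- final computation
  rw [relMeas, relMeas, relMeas, hval_L, hval_i, hval_j, hval_C, prod_split, sdiff_eq,
    prod_img, ← prod_i]
  field_simp


end Finitary
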